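/- Let A be a Noetherian ring, M a finitely generated A-module, and I an ideal of A admitting a principal reduction generated by an A-regular element: i.e., there exist an A-regular element y ∈ I and n_0 ≥ 1 with I^{n+1} = yI^n for all n ≥ n_0. Then Tor_i^A(M, A/I^n) ≅ Tor_i^A(M, A/I^{n_0}) for all i ≥ 2 and n ≥ n_0. -/

import Mathlib

open CategoryTheory

universe u

section ShiftAux

open CategoryTheory.Limits HomologicalComplex

set_option linter.unusedSectionVars false

variable {C : Type*} [Category C] [Abelian C] [HasProjectiveResolutions C]
variable {S F N : C} (f : S ⟶ F) (g : F ⟶ N)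

/-- The canonical map from the degree-0 part of a projective resolution to the object. -/
noncomputable def resPiZero (P : ProjectiveResolution S) : P.complex.X 0 ⟶ S :=
  P.π.f 0 ≫ (HomologicalComplex.singleObjXSelf (ComplexShape.down ℕ) 0 S).hom

lemma resPiZero_d (P : ProjectiveResolution S) :
    P.complex.d 1 0 ≫ resPiZero P = 0 := by
  unfold resPiZero; rw [← Category.assoc, P.complex_d_comp_π_f_zero, zero_comp]

instance (P : ProjectiveResolution S) : Epi (resPiZero P) := by
  unfold resPiZero; infer_instance

lemma exact_d_resPiZero (P : ProjectiveResolution S) :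
    (ShortComplex.mk (P.complex.d 1 0) (resPiZero P) (resPiZero_d P)).Exact := by
  refine (ShortComplex.exact_iff_of_iso
    (ShortComplex.isoMk
      (S₁ := ShortComplex.mk (P.complex.d 1 0) (P.π.f 0) P.complex_d_comp_π_f_zero)
      (S₂ := ShortComplex.mk (P.complex.d 1 0) (resPiZero P) (resPiZero_d P))
      (Iso.refl _) (Iso.refl _)
      (HomologicalComplex.singleObjXSelf (ComplexShape.down ℕ) 0 S)
      (by simp) (by simp [resPiZero]))).1 P.exact₀

/-- The underlying graded object of the shifted resolution. -/
noncomputable def shiftX (F : C) {S : C} (P : ProjectiveResolution S) : ℕ → C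
  | 0 => F
  | (k + 1) => P.complex.X k

/-- The differentials of the shifted resolution. -/
noncomputable def shiftD (P : ProjectiveResolution S) :
    ∀ n, shiftX F P (n + 1) ⟶ shiftX F P n
  | 0 => resPiZero P ≫ f
  | (k + 1) => P.complex.d (k + 1) k

/-- The shifted resolution complex of `N` from a resolution of `S` and `0 → S → F → N → 0`. -/
noncomputable def shiftComplex (P : ProjectiveResolution S) : ChainComplex C ℕ :=
  ChainComplex.of (shiftX F P) (shiftD f P) (by
    rintro (_ | n)
    · show P.complex.d 1 0 ≫ (resPiZero P ≫ f) = 0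
      rw [← Category.assoc, resPiZero_d, zero_comp]
    · show P.complex.d (n + 2) (n + 1) ≫ P.complex.d (n + 1) n = 0
      simp)

@[simp] lemma shiftComplex_X (P : ProjectiveResolution S) (n : ℕ) :
    (shiftComplex f P).X n = shiftX F P n := rfl

lemma shiftComplex_d_one_zero (P : ProjectiveResolution S) :
    (shiftComplex f P).d 1 0 = resPiZero P ≫ f :=
  ChainComplex.of_d (shiftX F P) (shiftD f P) 0

lemma shiftComplex_d_succ (P : ProjectiveResolution S) (n : ℕ) :
    (shiftComplex f P).d (n + 2) (n + 1) = P.complex.d (n + 1) n :=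
  ChainComplex.of_d (shiftX F P) (shiftD f P) (n + 1)

lemma shift_exact_two_one (hf : Mono f) (P : ProjectiveResolution S) :
    (ShortComplex.mk (P.complex.d 1 0) (resPiZero P ≫ f)
        (by rw [← Category.assoc, resPiZero_d, zero_comp])).Exact := by
  refine (ShortComplex.exact_iff_of_epi_of_isIso_of_mono
    (S₁ := ShortComplex.mk (P.complex.d 1 0) (resPiZero P) (resPiZero_d P))
    (S₂ := ShortComplex.mk (P.complex.d 1 0) (resPiZero P ≫ f)
        (by rw [← Category.assoc, resPiZero_d, zero_comp]))
    { τ₁ := 𝟙 _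
      τ₂ := 𝟙 _
      τ₃ := f
      comm₁₂ := by simp
      comm₂₃ := by simp }).1 (exact_d_resPiZero P)

lemma shiftComplex_exactAt_succ (hf : Mono f) (P : ProjectiveResolution S) (n : ℕ) :
    (shiftComplex f P).ExactAt (n + 1) := by
  rw [HomologicalComplex.exactAt_iff' _ (n + 2) (n + 1) n (by simp) (by simp)]
  match n with
  | 0 =>
    refine (ShortComplex.exact_iff_of_iso
      (ShortComplex.isoMk
        (S₁ := ShortComplex.mk (P.complex.d 1 0) (resPiZero P ≫ f)
          (by rw [← Category.assoc, resPiZero_d, zero_comp]))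
        (S₂ := (shiftComplex f P).sc' 2 1 0)
        (Iso.refl _) (Iso.refl _) (Iso.refl _)
        (by simp [HomologicalComplex.sc', shortComplexFunctor', shiftComplex_d_succ]; exact (Category.id_comp _).trans (Category.comp_id _).symm)
        (by simp [HomologicalComplex.sc', shortComplexFunctor',
          shiftComplex_d_one_zero]; exact (Category.id_comp _).trans (Category.comp_id _).symm))).1 (shift_exact_two_one f hf P)
  | (n + 1) =>
    refine (ShortComplex.exact_iff_of_iso
      (ShortComplex.isoMk
        (S₁ := ShortComplex.mk (P.complex.d (n + 2) (n + 1)) (P.complex.d (n + 1) n) (by simp))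
        (S₂ := (shiftComplex f P).sc' (n + 3) (n + 2) (n + 1))
        (Iso.refl _) (Iso.refl _) (Iso.refl _)
        (by simp [HomologicalComplex.sc', shortComplexFunctor', shiftComplex_d_succ]; exact (Category.id_comp _).trans (Category.comp_id _).symm)
        (by simp [HomologicalComplex.sc', shortComplexFunctor',
          shiftComplex_d_succ]; exact (Category.id_comp _).trans (Category.comp_id _).symm))).1 (P.exact_succ n)

/-- The shifted projective resolution of `N`. -/
noncomputable def shiftRes (w : f ≫ g = 0) (hf : Mono f) (hg : Epi g) [Projective F]
    (hex : (ShortComplex.mk f g w).Exact) (P : ProjectiveResolution S) :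
    ProjectiveResolution N where
  complex := shiftComplex f P
  projective := by
    rintro (_ | n)
    · show Projective F
      infer_instance
    · show Projective (P.complex.X n)
      infer_instance
  π := (ChainComplex.toSingle₀Equiv _ _).symm ⟨g, by
    rw [shiftComplex_d_one_zero]; exact (Category.assoc (resPiZero P) f g).trans (by rw [w]; exact comp_zero)⟩
  quasiIso := ⟨fun n => by
    cases n with
    | zero =>
      rw [ChainComplex.quasiIsoAt₀_iff, ShortComplex.quasiIso_iff_of_zeros']
      · refine (ShortComplex.exact_and_epi_g_iff_of_iso
            (S₁ := ShortComplex.mk (resPiZero P ≫ f) g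
              (by rw [Category.assoc, w, comp_zero])) ?_).1 ⟨?_, hg⟩
        · refine ShortComplex.isoMk
            (Iso.refl _) (Iso.refl _) (Iso.refl _) ?_ ?_
          · simp [shiftComplex_d_one_zero]; exact (Category.id_comp _).trans (Category.comp_id _).symm
          · exact (Category.id_comp _).trans ((ChainComplex.toSingle₀Equiv_symm_apply_f_zero _ _).trans
              (Category.comp_id _).symm)
        · refine (ShortComplex.exact_iff_of_epi_of_isIso_of_mono
            (S₁ := ShortComplex.mk (resPiZero P ≫ f) g
              (by rw [Category.assoc, w, comp_zero]))
            (S₂ := ShortComplex.mk f g w)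
            { τ₁ := resPiZero P
              τ₂ := 𝟙 _
              τ₃ := 𝟙 _
              comm₁₂ := by simp
              comm₂₃ := by simp }).2 hex
      · rfl
      · rfl
      · rfl
    | succ n =>
      rw [quasiIsoAt_iff_exactAt']
      · exact shiftComplex_exactAt_succ f hf P n
      · apply ChainComplex.exactAt_succ_single_obj⟩

variable {D : Type*} [Category D] [Abelian D]

/-- Dimension shifting for left derived functors along `0 → S → F → N → 0` with `F` projective. -/
noncomputable def leftDerivedShiftIso (G : C ⥤ D) [G.Additive]
    (w : f ≫ g = 0) (hf : Mono f) (hg : Epi g) [Projective F]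
    (hex : (ShortComplex.mk f g w).Exact) (j : ℕ) :
    (G.leftDerived (j + 2)).obj N ≅ (G.leftDerived (j + 1)).obj S := by
  have P : ProjectiveResolution S := (HasProjectiveResolution.out (Z := S)).some
  let Q : ProjectiveResolution N := shiftRes f g w hf hg hex P
  refine Q.isoLeftDerivedObj G (j + 2) ≪≫ ?_ ≪≫ (P.isoLeftDerivedObj G (j + 1)).symm
  let K1 := (G.mapHomologicalComplex (ComplexShape.down ℕ)).obj Q.complex
  let K2 := (G.mapHomologicalComplex (ComplexShape.down ℕ)).obj P.complex
  refine K1.homologyIsoSc' (j + 3) (j + 2) (j + 1) (by simp) (by simp) ≪≫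
    ShortComplex.homologyMapIso ?_ ≪≫
    (K2.homologyIsoSc' (j + 2) (j + 1) j (by simp) (by simp)).symm
  refine ShortComplex.isoMk (Iso.refl _) (Iso.refl _) (Iso.refl _) ?_ ?_
  · show 𝟙 _ ≫ G.map (P.complex.d (j + 2) (j + 1)) =
      G.map ((shiftComplex f P).d (j + 3) (j + 2)) ≫ 𝟙 _
    rw [shiftComplex_d_succ]
    simp
    rfl
  · show 𝟙 _ ≫ G.map (P.complex.d (j + 1) j) =
      G.map ((shiftComplex f P).d (j + 2) (j + 1)) ≫ 𝟙 _
    rw [shiftComplex_d_succ]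
    simp
    rfl

end ShiftAux

section Ideals

variable {A : Type u} [CommRing A]

instance : CategoryTheory.Projective (ModuleCat.of A A) :=
  ModuleCat.projective_of_free (Module.Basis.singleton PUnit.{u + 1} A)

/-- Dimension shifting for `Tor` of an ideal quotient. -/
noncomputable def torIdealShiftIso (G : ModuleCat.{u} A ⥤ ModuleCat.{u} A) [G.Additive]
    (J : Ideal A) (j : ℕ) :
    (G.leftDerived (j + 2)).obj (ModuleCat.of A (A ⧸ J)) ≅
      (G.leftDerived (j + 1)).obj (ModuleCat.of A ↥J) := by
  have w : ModuleCat.ofHom J.subtype ≫ ModuleCat.ofHom J.mkQ = 0 := by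
    ext x
    simpa using (Submodule.Quotient.mk_eq_zero J).2 x.2
  have hf : Mono (ModuleCat.ofHom J.subtype) :=
    (ModuleCat.mono_iff_injective _).2 J.injective_subtype
  have hg : Epi (ModuleCat.ofHom J.mkQ) :=
    (ModuleCat.epi_iff_surjective _).2 (Submodule.mkQ_surjective J)
  have hex : (ShortComplex.mk (ModuleCat.ofHom J.subtype) (ModuleCat.ofHom J.mkQ) w).Exact := by
    rw [ShortComplex.moduleCat_exact_iff]
    intro x hx
    have hxJ : x ∈ J := (Submodule.Quotient.mk_eq_zero J).1 hx
    exact ⟨⟨x, hxJ⟩, rfl⟩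
  exact leftDerivedShiftIso (ModuleCat.ofHom J.subtype) (ModuleCat.ofHom J.mkQ) G w hf hg hex j

end Ideals

/-- **Stability of `Tor_i(M, A/Iⁿ)` for ideals with a principal reduction.**
Let `A` be a Noetherian ring, `M` a finitely generated `A`-module, and `I` an ideal admitting a
principal reduction generated by an `A`-regular element: there exist a non-zerodivisor `y ∈ I`
and `n₀ ≥ 1` with `I^{n+1} = y·Iⁿ` for all `n ≥ n₀`. Then
`Tor_i^A(M, A/Iⁿ) ≅ Tor_i^A(M, A/I^{n₀})` for all `i ≥ 2` and `n ≥ n₀`. -/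
theorem tor_stable_of_principal_reduction (A : Type u) [CommRing A] [IsNoetherianRing A]
    (M : Type u) [AddCommGroup M] [Module A M] [Module.Finite A M]
    (I : Ideal A) (y : A) (hyI : y ∈ I) (hy : y ∈ nonZeroDivisors A)
    (n₀ : ℕ) (hn₀ : 1 ≤ n₀) (hred : ∀ n ≥ n₀, I ^ (n + 1) = Ideal.span {y} * I ^ n) :
    ∀ i : ℕ, 2 ≤ i → ∀ n ≥ n₀,
      Nonempty ((((Tor (ModuleCat.{u} A) i).obj (ModuleCat.of A M)).obj
          (ModuleCat.of A (A ⧸ I ^ n))) ≅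
        (((Tor (ModuleCat.{u} A) i).obj (ModuleCat.of A M)).obj
          (ModuleCat.of A (A ⧸ I ^ n₀)))) := by
  intro i hi n hn
  obtain ⟨j, rfl⟩ : ∃ j, i = j + 2 := ⟨i - 2, by omega⟩
  set G := (CategoryTheory.MonoidalCategory.tensoringLeft (ModuleCat.{u} A)).obj
    (ModuleCat.of A M) with hG
  induction n with
  | zero => omega
  | succ n ih =>
    rcases eq_or_lt_of_le hn with h | h
    · rw [← h]
      exact ⟨Iso.refl _⟩
    · have hn' : n₀ ≤ n := by omega
      obtain ⟨e⟩ := ih hn'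
      -- the module isomorphism I^n ≃ I^(n+1), x ↦ y * x
      have hinj : Function.Injective (LinearMap.lsmul A A y) := by
        intro a b hab
        simp only [LinearMap.lsmul_apply, smul_eq_mul] at hab
        have h0 : (a - b) * y = 0 := by
          rw [sub_mul, mul_comm a y, mul_comm b y, hab, sub_self]
        have := mem_nonZeroDivisors_iff_right.1 hy _ h0
        exact sub_eq_zero.1 this
      have hmap : Submodule.map (LinearMap.lsmul A A y) (I ^ n) = I ^ (n + 1) := by
        rw [hred n hn']
        ext x
        simp only [Submodule.mem_map, LinearMap.lsmul_apply, smul_eq_mul,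
          Ideal.mem_span_singleton_mul]
      let eMod : (↥(I ^ n) ≃ₗ[A] ↥(I ^ (n + 1))) :=
        (Submodule.equivMapOfInjective _ hinj (I ^ n)).trans (LinearEquiv.ofEq _ _ hmap)
      let eIso : ModuleCat.of A ↥(I ^ n) ≅ ModuleCat.of A ↥(I ^ (n + 1)) := eMod.toModuleIso
      let e₁ : (G.leftDerived (j + 2)).obj (ModuleCat.of A (A ⧸ I ^ (n + 1))) ≅
          (G.leftDerived (j + 2)).obj (ModuleCat.of A (A ⧸ I ^ n)) :=
        torIdealShiftIso G (I ^ (n + 1)) j ≪≫ (G.leftDerived (j + 1)).mapIso eIso.symm ≪≫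
          (torIdealShiftIso G (I ^ n) j).symm
      exact ⟨e₁.trans e⟩
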